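/- Let H be a graph and e = (u,v) an edge of H. Then among Widom-Rowlinson configurations of H - e, the number with both u and v colored red is at least the number with u colored red and v colored blue: wr(H-e | u,v ∈ A) ≥ wr(H-e | u ∈ A, v ∈ C). -/

import Mathlib

open SimpleGraph

/-- Number of Widom-Rowlinson configurations of a graph: colorings of the vertices with
red (0), white (1) and blue (2) such that no red vertex is adjacent to a blue vertex. -/
noncomputable def wrCount {V : Type*} (H : SimpleGraph V) : ℕ :=
  Nat.card {c : V → Fin 3 // ∀ a b, H.Adj a b → ¬(c a = 0 ∧ c b = 2)}

/-- Auxiliary graph: edges of `H'` between non-white vertices. -/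
def grAux {V : Type*} (H' : SimpleGraph V) (c : V → Fin 3) : SimpleGraph V where
  Adj a b := H'.Adj a b ∧ c a ≠ 1 ∧ c b ≠ 1
  symm := ⟨fun a b h => ⟨h.1.symm, h.2.2, h.2.1⟩⟩
  loopless := ⟨fun a h => H'.loopless.irrefl a h.1⟩

lemma fin3_aux : ∀ x : Fin 3, x ≠ 0 → x ≠ 1 → x = 2 := by decide

lemma grAux_walk_blue {V : Type*} (H' : SimpleGraph V) (c : V → Fin 3)
    (hc : ∀ a b, H'.Adj a b → ¬(c a = 0 ∧ c b = 2)) :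
    ∀ {x y : V}, (grAux H' c).Walk x y → c x = 2 → c y = 2 := by
  intro x y w
  induction w with
  | nil => exact id
  | @cons x b y h w ih =>
    intro hx
    obtain ⟨hadj, hx1, hb1⟩ := h
    have h0 : c b ≠ 0 := fun h0 => hc b x hadj.symm ⟨h0, hx⟩
    exact ih (fin3_aux _ h0 hb1)

lemma grAux_eq {V : Type*} (H' : SimpleGraph V) (c c' : V → Fin 3)
    (h : ∀ a, c a = 1 ↔ c' a = 1) : grAux H' c = grAux H' c' := by
  ext a b
  constructor
  · rintro ⟨h1, h2, h3⟩
    exact ⟨h1, fun hh => h2 ((h a).2 hh), fun hh => h3 ((h b).2 hh)⟩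
  · rintro ⟨h1, h2, h3⟩
    exact ⟨h1, fun hh => h2 ((h a).1 hh), fun hh => h3 ((h b).1 hh)⟩

theorem stmt_17 {V : Type*} [Fintype V] (H : SimpleGraph V) (u v : V) (he : H.Adj u v) :
    Nat.card {c : V → Fin 3 //
        (∀ a b, (H.deleteEdges {s(u, v)}).Adj a b → ¬(c a = 0 ∧ c b = 2)) ∧
        c u = 0 ∧ c v = 0} ≥
      Nat.card {c : V → Fin 3 //
        (∀ a b, (H.deleteEdges {s(u, v)}).Adj a b → ¬(c a = 0 ∧ c b = 2)) ∧
        c u = 0 ∧ c v = 2} := by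
  classical
  set H' := H.deleteEdges {s(u, v)} with hH'
  -- the recoloring map
  let F : (V → Fin 3) → (V → Fin 3) := fun c a =>
    if (grAux H' c).Reachable v a then 0 else c a
  -- basic properties of F
  have hF_white : ∀ (c : V → Fin 3), (∀ a b, H'.Adj a b → ¬(c a = 0 ∧ c b = 2)) →
      c v = 2 → ∀ a, (F c a = 1 ↔ c a = 1) := by
    intro c hc hv a
    by_cases hr : (grAux H' c).Reachable v a
    · have h2 : c a = 2 := by obtain ⟨w⟩ := hr; exact grAux_walk_blue H' c hc w hv
      simp only [F]
      rw [if_pos hr, h2]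
      decide
    · simp [F, if_neg hr]
  have key : ∀ c : {c : V → Fin 3 //
        (∀ a b, H'.Adj a b → ¬(c a = 0 ∧ c b = 2)) ∧ c u = 0 ∧ c v = 2},
      (∀ a b, H'.Adj a b → ¬(F c.1 a = 0 ∧ F c.1 b = 2)) ∧ F c.1 u = 0 ∧ F c.1 v = 0 := by
    rintro ⟨c, hc, hu, hv⟩
    refine ⟨?_, ?_, ?_⟩
    · intro a b hab h
      obtain ⟨ha, hb⟩ := h
      simp only [F] at ha hb
      by_cases hrb : (grAux H' c).Reachable v b
      · rw [if_pos hrb] at hb; exact absurd hb (by decide)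
      · rw [if_neg hrb] at hb
        by_cases hra : (grAux H' c).Reachable v a
        · have ha2 : c a = 2 := by
            obtain ⟨w⟩ := hra; exact grAux_walk_blue H' c hc w hv
          exact hrb (hra.trans (Adj.reachable ⟨hab, by rw [ha2]; decide, by rw [hb]; decide⟩))
        · rw [if_neg hra] at ha
          exact hc a b hab ⟨ha, hb⟩
    · simp only [F]
      split <;> simp [hu]
    · simp only [F, if_pos (Reachable.refl v)]
  let f : {c : V → Fin 3 //
        (∀ a b, H'.Adj a b → ¬(c a = 0 ∧ c b = 2)) ∧ c u = 0 ∧ c v = 2} →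
      {c : V → Fin 3 //
        (∀ a b, H'.Adj a b → ¬(c a = 0 ∧ c b = 2)) ∧ c u = 0 ∧ c v = 0} :=
    fun c => ⟨F c.1, key c⟩
  have hinj : Function.Injective f := by
    rintro ⟨c1, hc1, hu1, hv1⟩ ⟨c2, hc2, hu2, hv2⟩ hfe
    have heq : F c1 = F c2 := congrArg Subtype.val hfe
    have hwhite : ∀ a, c1 a = 1 ↔ c2 a = 1 := by
      intro a
      rw [← hF_white c1 hc1 hv1 a, ← hF_white c2 hc2 hv2 a, heq]
    have hgr : grAux H' c1 = grAux H' c2 := grAux_eq H' c1 c2 hwhite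
    refine Subtype.ext (funext fun a => ?_)
    show c1 a = c2 a
    by_cases hr : (grAux H' c1).Reachable v a
    · have h1 : c1 a = 2 := by obtain ⟨w⟩ := hr; exact grAux_walk_blue H' c1 hc1 w hv1
      have h2 : c2 a = 2 := by
        obtain ⟨w⟩ := (hgr ▸ hr); exact grAux_walk_blue H' c2 hc2 w hv2
      rw [h1, h2]
    · have h1 : F c1 a = c1 a := if_neg hr
      have h2 : F c2 a = c2 a := if_neg (hgr ▸ hr)
      rw [← h1, ← h2, heq]
  exact Nat.card_le_card_of_injective f hinj
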